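/- A graph G on n ≥ 3 vertices satisfies λ_1(G) > 0, λ_2(G) ≤ 0 and λ_3(G) < 0 if and only if G is isomorphic to K_n, to K_1 + K_{n−1}, or to K_n \ e for an edge e. -/

import Mathlib

open SimpleGraph Finset

/-- Adjacency matrix over `ℝ` (classical decidability). -/
noncomputable def adjMatR {n : ℕ} (G : SimpleGraph (Fin n)) : Matrix (Fin n) (Fin n) ℝ :=
  @SimpleGraph.adjMatrix ℝ (Fin n) G (Classical.decRel _) _ _

lemma adjMatR_isHermitian {n : ℕ} (G : SimpleGraph (Fin n)) : (adjMatR G).IsHermitian := by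
  have h : (adjMatR G).IsSymm := @SimpleGraph.isSymm_adjMatrix ℝ (Fin n) G (Classical.decRel _) _ _
  first
    | exact (Matrix.conjTranspose_eq_transpose_of_trivial _).trans h
    | simpa [Matrix.IsHermitian, Matrix.conjTranspose, Matrix.IsSymm, starRingEnd_apply, star_trivial] using h

/-- Multiset of adjacency eigenvalues (with multiplicity). -/
noncomputable def specMS {n : ℕ} (G : SimpleGraph (Fin n)) : Multiset ℝ :=
  Finset.univ.val.map (adjMatR_isHermitian G).eigenvalues

/-- `i`-th largest adjacency eigenvalue (0-indexed). -/
noncomputable def eigval {n : ℕ} (G : SimpleGraph (Fin n)) (i : ℕ) : ℝ :=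
  ((specMS G).sort (· ≥ ·)).getD i 0

/-- Graph energy. -/
noncomputable def energy {n : ℕ} (G : SimpleGraph (Fin n)) : ℝ :=
  ((specMS G).map (fun x => |x|)).sum

/-- ℓ¹ spectral distance. -/
noncomputable def specDist {n : ℕ} (G H : SimpleGraph (Fin n)) : ℝ :=
  ∑ i ∈ Finset.range n, |eigval G i - eigval H i|

/-- number of edges -/
noncomputable def numEdges {n : ℕ} (G : SimpleGraph (Fin n)) : ℕ := G.edgeSet.ncard

/-- `K_2 + (n-2)K_1`: one edge plus isolated vertices. -/
def oneEdgeG (n : ℕ) : SimpleGraph (Fin n) :=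
  SimpleGraph.fromRel (fun u v => (u : ℕ) = 0 ∧ (v : ℕ) = 1)

/-- `P_3 + (n-3)K_1`: a path on 3 vertices plus isolated vertices. -/
def path3G (n : ℕ) : SimpleGraph (Fin n) :=
  SimpleGraph.fromRel (fun u v => ((u : ℕ) = 0 ∧ (v : ℕ) = 1) ∨ ((u : ℕ) = 1 ∧ (v : ℕ) = 2))

/-- Complete bipartite graph `K_{a,b}` on `Fin (a+b)`. -/
def compBip (a b : ℕ) : SimpleGraph (Fin (a + b)) :=
  SimpleGraph.fromRel (fun u v => (u : ℕ) < a ∧ a ≤ (v : ℕ))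

/-- `K_{r,s} + tK_1`: complete bipartite plus `t` isolated vertices. -/
def compBipPlus (r s t : ℕ) : SimpleGraph (Fin (r + s + t)) :=
  SimpleGraph.fromRel (fun u v => (u : ℕ) < r ∧ r ≤ (v : ℕ) ∧ (v : ℕ) < r + s)

/-- `K_1 + K_{n-1}`: an isolated vertex plus a complete graph. -/
def k1PlusComplete (n : ℕ) : SimpleGraph (Fin n) :=
  SimpleGraph.fromRel (fun u v => (u : ℕ) ≠ 0 ∧ (v : ℕ) ≠ 0)

/-- `(K_1 + K_2) ∇ (n-3)K_1`: join of `K_1 + K_2` with `n-3` isolated vertices. -/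
def k1k2JoinEmpty (n : ℕ) : SimpleGraph (Fin n) :=
  SimpleGraph.fromRel (fun u v =>
    ((u : ℕ) = 1 ∧ (v : ℕ) = 2) ∨ ((u : ℕ) < 3 ∧ 3 ≤ (v : ℕ)))

namespace SpecCore

variable {n : ℕ}

noncomputable def Bf (A : Matrix (Fin n) (Fin n) ℝ) (x y : Fin n → ℝ) : ℝ :=
  dotProduct x (A.mulVec y)

noncomputable def Npos (A : Matrix (Fin n) (Fin n) ℝ) (hA : A.IsHermitian) : ℕ :=
  (univ.filter (fun j => 0 < hA.eigenvalues j)).card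

noncomputable def Nnn (A : Matrix (Fin n) (Fin n) ℝ) (hA : A.IsHermitian) : ℕ :=
  (univ.filter (fun j => 0 ≤ hA.eigenvalues j)).card

variable (A : Matrix (Fin n) (Fin n) ℝ) (hA : A.IsHermitian)

noncomputable def eigSpan (S : Finset (Fin n)) : Submodule ℝ (EuclideanSpace ℝ (Fin n)) :=
  Submodule.span ℝ (Set.range (fun i : S => hA.eigenvectorBasis (i : Fin n)))

lemma orthonormal_sub (S : Finset (Fin n)) :
    Orthonormal ℝ (fun i : S => hA.eigenvectorBasis (i : Fin n)) :=
  (hA.eigenvectorBasis.orthonormal).comp _ Subtype.val_injective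

lemma finrank_eigSpan (S : Finset (Fin n)) :
    Module.finrank ℝ (eigSpan A hA S) = S.card := by
  rw [eigSpan, finrank_span_eq_card ((orthonormal_sub A hA S).linearIndependent)]
  exact Fintype.card_coe S

lemma mem_eigSpan (S : Finset (Fin n)) (x : EuclideanSpace ℝ (Fin n)) (hx : x ∈ eigSpan A hA S) :
    ∃ c : S → ℝ, (x = ∑ i, c i • hA.eigenvectorBasis (i : Fin n)) ∧
      Bf A x x = ∑ i : S, hA.eigenvalues (i : Fin n) * c i ^ 2 := by
  rw [eigSpan, Submodule.mem_span_range_iff_exists_fun] at hx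
  obtain ⟨c, hc⟩ := hx
  refine ⟨c, hc.symm, ?_⟩
  have hmv : A.mulVec x = ∑ i : S, (hA.eigenvalues (i : Fin n) * c i) • hA.eigenvectorBasis (i : Fin n) := by
    rw [← hc]
    rw [show (∑ i : S, c i • hA.eigenvectorBasis (i : Fin n) : EuclideanSpace ℝ (Fin n)) = ∑ i : S, c i • (hA.eigenvectorBasis (i : Fin n) : EuclideanSpace ℝ (Fin n)) from rfl]
    have h1 : A.mulVec (∑ i : S, c i • (hA.eigenvectorBasis (i : Fin n) : Fin n → ℝ))
        = ∑ i : S, c i • A.mulVec (hA.eigenvectorBasis (i : Fin n)) := by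
      simp only [← Matrix.mulVecLin_apply, map_sum, map_smul]
    simp only [WithLp.ofLp_sum, WithLp.ofLp_smul]
    rw [h1]
    refine Finset.sum_congr rfl fun i _ => ?_
    rw [show A.mulVec (hA.eigenvectorBasis (i : Fin n)) =
        hA.eigenvalues (i : Fin n) • (hA.eigenvectorBasis (i : Fin n) : Fin n → ℝ) from
        hA.mulVec_eigenvectorBasis (i : Fin n)]
    rw [smul_smul, mul_comm]
  have hinner : Bf A x x = inner ℝ x (WithLp.toLp 2 (A.mulVec x)) := by
    simp [Bf, dotProduct, PiLp.inner_apply, RCLike.inner_apply, mul_comm]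
  rw [hinner, hmv, WithLp.toLp_ofLp, ← hc]
  rw [sum_inner]
  refine Finset.sum_congr rfl fun i _ => ?_
  rw [real_inner_smul_left, (orthonormal_sub A hA S).inner_right_sum _ (Finset.mem_univ i)]
  ring


lemma eigSpan_nonpos (S : Finset (Fin n)) (hS : ∀ j ∈ S, hA.eigenvalues j ≤ 0) :
    ∀ x ∈ eigSpan A hA S, Bf A x x ≤ 0 := by
  intro x hx
  obtain ⟨c, -, hB⟩ := mem_eigSpan A hA S x hx
  rw [hB]
  exact Finset.sum_nonpos fun i _ => mul_nonpos_of_nonpos_of_nonneg (hS i i.2) (sq_nonneg _)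

lemma eigSpan_nonneg (S : Finset (Fin n)) (hS : ∀ j ∈ S, 0 ≤ hA.eigenvalues j) :
    ∀ x ∈ eigSpan A hA S, 0 ≤ Bf A x x := by
  intro x hx
  obtain ⟨c, -, hB⟩ := mem_eigSpan A hA S x hx
  rw [hB]
  exact Finset.sum_nonneg fun i _ => mul_nonneg (hS i i.2) (sq_nonneg _)

lemma exists_ne_of_repr {S : Finset (Fin n)} {x : EuclideanSpace ℝ (Fin n)} {c : S → ℝ}
    (hc : x = ∑ i, c i • hA.eigenvectorBasis (i : Fin n)) (hx : x ≠ 0) : ∃ i, c i ≠ 0 := by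
  by_contra h
  push_neg at h
  apply hx
  rw [hc]
  simp [h]

lemma eigSpan_neg (S : Finset (Fin n)) (hS : ∀ j ∈ S, hA.eigenvalues j < 0) :
    ∀ x ∈ eigSpan A hA S, x ≠ 0 → Bf A x x < 0 := by
  intro x hx hx0
  obtain ⟨c, hc, hB⟩ := mem_eigSpan A hA S x hx
  obtain ⟨i, hi⟩ := exists_ne_of_repr A hA hc hx0
  rw [hB]
  have : (0:ℝ) = ∑ i : S, 0 := by simp
  rw [this]
  refine Finset.sum_lt_sum (fun j _ => ?_) ⟨i, Finset.mem_univ i, ?_⟩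
  · exact mul_nonpos_of_nonpos_of_nonneg (le_of_lt (hS j j.2)) (sq_nonneg _)
  · exact mul_neg_of_neg_of_pos (hS i i.2) (by positivity)

lemma eigSpan_pos (S : Finset (Fin n)) (hS : ∀ j ∈ S, 0 < hA.eigenvalues j) :
    ∀ x ∈ eigSpan A hA S, x ≠ 0 → 0 < Bf A x x := by
  intro x hx hx0
  obtain ⟨c, hc, hB⟩ := mem_eigSpan A hA S x hx
  obtain ⟨i, hi⟩ := exists_ne_of_repr A hA hc hx0
  rw [hB]
  have : (0:ℝ) = ∑ i : S, 0 := by simp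
  rw [this]
  refine Finset.sum_lt_sum (fun j _ => ?_) ⟨i, Finset.mem_univ i, ?_⟩
  · exact mul_nonneg (le_of_lt (hS j j.2)) (sq_nonneg _)
  · exact mul_pos (hS i i.2) (by positivity)

lemma key (W : Submodule ℝ (EuclideanSpace ℝ (Fin n))) (S : Finset (Fin n))
    (h : ∀ x, x ∈ W → x ∈ eigSpan A hA S → x = 0) :
    Module.finrank ℝ W + S.card ≤ n := by
  have hbot : W ⊓ eigSpan A hA S = ⊥ := by
    rw [Submodule.eq_bot_iff]
    exact fun x hx => h x hx.1 hx.2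
  have h2 := Submodule.finrank_sup_add_finrank_inf_eq W (eigSpan A hA S)
  rw [hbot, finrank_bot] at h2
  have h3 : Module.finrank ℝ ↥(W ⊔ eigSpan A hA S) ≤ n := by
    simpa [finrank_euclideanSpace_fin] using Submodule.finrank_le (W ⊔ eigSpan A hA S)
  have h4 := finrank_eigSpan A hA S
  omega

lemma card_filter_neg_pos :
    (univ.filter (fun j => hA.eigenvalues j ≤ 0)).card = n - Npos A hA := by
  have h := Finset.card_filter_add_card_filter_not
    (s := (univ : Finset (Fin n))) (p := fun j => 0 < hA.eigenvalues j)
  simp only [not_lt, Finset.card_univ, Fintype.card_fin] at h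
  unfold Npos
  omega

lemma card_filter_neg_nn :
    (univ.filter (fun j => hA.eigenvalues j < 0)).card = n - Nnn A hA := by
  have h := Finset.card_filter_add_card_filter_not
    (s := (univ : Finset (Fin n))) (p := fun j => 0 ≤ hA.eigenvalues j)
  simp only [not_le, Finset.card_univ, Fintype.card_fin] at h
  unfold Nnn
  omega

lemma Npos_le : Npos A hA ≤ n := by
  simpa [Npos] using Finset.card_filter_le (univ : Finset (Fin n)) (fun j => 0 < hA.eigenvalues j)

lemma Nnn_le : Nnn A hA ≤ n := by
  simpa [Nnn] using Finset.card_filter_le (univ : Finset (Fin n)) (fun j => 0 ≤ hA.eigenvalues j)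

lemma K1 (W : Submodule ℝ (EuclideanSpace ℝ (Fin n))) (hW : ∀ x ∈ W, x ≠ 0 → 0 < Bf A x x) :
    Module.finrank ℝ W ≤ Npos A hA := by
  have hk := key A hA W (univ.filter (fun j => hA.eigenvalues j ≤ 0)) ?_
  · have := card_filter_neg_pos A hA
    have := Npos_le A hA
    omega
  · intro x hxW hxU
    by_contra hx0
    exact absurd (eigSpan_nonpos A hA _ (fun j hj => (Finset.mem_filter.mp hj).2) x hxU)
      (not_le.mpr (hW x hxW hx0))

lemma K2 (W : Submodule ℝ (EuclideanSpace ℝ (Fin n))) (hW : ∀ x ∈ W, 0 ≤ Bf A x x) :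
    Module.finrank ℝ W ≤ Nnn A hA := by
  have hk := key A hA W (univ.filter (fun j => hA.eigenvalues j < 0)) ?_
  · have := card_filter_neg_nn A hA
    have := Nnn_le A hA
    omega
  · intro x hxW hxU
    by_contra hx0
    exact absurd (eigSpan_neg A hA _ (fun j hj => (Finset.mem_filter.mp hj).2) x hxU hx0)
      (not_lt.mpr (hW x hxW))

lemma K3 (W : Submodule ℝ (EuclideanSpace ℝ (Fin n))) (hW : ∀ x ∈ W, Bf A x x ≤ 0) :
    Module.finrank ℝ W + Npos A hA ≤ n := by
  have hk := key A hA W (univ.filter (fun j => 0 < hA.eigenvalues j)) ?_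
  · unfold Npos at *
    omega
  · intro x hxW hxU
    by_contra hx0
    exact absurd (eigSpan_pos A hA _ (fun j hj => (Finset.mem_filter.mp hj).2) x hxU hx0)
      (not_lt.mpr (hW x hxW))

lemma K4 (W : Submodule ℝ (EuclideanSpace ℝ (Fin n))) (hW : ∀ x ∈ W, x ≠ 0 → Bf A x x < 0) :
    Module.finrank ℝ W + Nnn A hA ≤ n := by
  have hk := key A hA W (univ.filter (fun j => 0 ≤ hA.eigenvalues j)) ?_
  · unfold Nnn at *
    omega
  · intro x hxW hxU
    by_contra hx0
    exact absurd (eigSpan_nonneg A hA _ (fun j hj => (Finset.mem_filter.mp hj).2) x hxU)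
      (not_le.mpr (hW x hxW hx0))

end SpecCore

namespace SpecCore

lemma sorted_count (P : ℝ → Prop) [DecidablePred P] (hup : ∀ x y : ℝ, x ≤ y → P x → P y) :
    ∀ (l : List ℝ), l.Pairwise (· ≥ ·) → ∀ i, i < l.length →
      (P (l.getD i 0) ↔ i < l.countP (fun x => decide (P x))) := by
  intro l
  induction l with
  | nil => intro _ i hi; simp at hi
  | cons a t ih =>
    intro hl i hi
    rw [List.pairwise_cons] at hl
    obtain ⟨ha, ht⟩ := hl
    match i with
    | 0 =>
      simp only [List.getD_cons_zero, List.countP_cons]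
      constructor
      · intro hPa
        rw [if_pos (decide_eq_true hPa)]
        omega
      · intro h
        by_contra hPa
        rw [if_neg (by simpa using hPa)] at h
        obtain ⟨b, hb, hPb⟩ := List.countP_pos_iff (p := fun x => decide (P x)) |>.mp (by simp only [Nat.add_zero] at h; simpa using h)
        exact hPa (hup b a (ha b hb) (of_decide_eq_true hPb))
    | (i+1) =>
      simp only [List.getD_cons_succ, List.countP_cons]
      simp only [List.length_cons, Nat.add_lt_add_iff_right] at hi
      by_cases hPa : P a
      · rw [if_pos (decide_eq_true hPa)]
        rw [ih ht i hi]
        omega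
      · have hnone : ∀ b ∈ t, ¬ P b := fun b hb hPb => hPa (hup b a (ha b hb) hPb)
        have hcount : t.countP (fun x => decide (P x)) = 0 := by
          rw [List.countP_eq_zero]
          intro b hb
          simpa using hnone b hb
        have hmem : t.getD i 0 ∈ t := by
          rw [List.getD_eq_getElem t 0 hi]
          exact List.getElem_mem hi
        rw [if_neg (by simpa using hPa), hcount]
        constructor
        · intro hP
          exact absurd hP (hnone _ hmem)
        · intro h
          omega

end SpecCore

section Bridge

variable {n : ℕ} (G : SimpleGraph (Fin n))

lemma specMS_sort_length : ((specMS G).sort (· ≥ ·)).length = n := by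
  rw [Multiset.length_sort, specMS, Multiset.card_map]
  simp

lemma specMS_countP (P : ℝ → Prop) [DecidablePred P] :
    ((specMS G).sort (· ≥ ·)).countP (fun x => decide (P x)) =
      (univ.filter (fun j => P ((adjMatR_isHermitian G).eigenvalues j))).card := by
  have h1 : (((specMS G).sort (· ≥ ·) : List ℝ) : Multiset ℝ) = specMS G :=
    Multiset.sort_eq _ _
  have h2 := Multiset.coe_countP (p := P) ((specMS G).sort (· ≥ ·))
  rw [h1] at h2
  rw [← h2, specMS, Multiset.countP_map]
  rfl

lemma eigval_iff (P : ℝ → Prop) [DecidablePred P] (hup : ∀ x y : ℝ, x ≤ y → P x → P y)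
    (i : ℕ) (hi : i < n) :
    P (eigval G i) ↔
      i < (univ.filter (fun j => P ((adjMatR_isHermitian G).eigenvalues j))).card := by
  rw [eigval, SpecCore.sorted_count P hup _ (Multiset.pairwise_sort _ _) i
    (by rw [specMS_sort_length]; exact hi), specMS_countP]

lemma cond_iff_counts (hn : 3 ≤ n) :
    (0 < eigval G 0 ∧ eigval G 1 ≤ 0 ∧ eigval G 2 < 0) ↔
      (SpecCore.Npos (adjMatR G) (adjMatR_isHermitian G) = 1 ∧
       SpecCore.Nnn (adjMatR G) (adjMatR_isHermitian G) ≤ 2) := by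
  have hup1 : ∀ x y : ℝ, x ≤ y → 0 < x → 0 < y := fun x y h hx => lt_of_lt_of_le hx h
  have hup2 : ∀ x y : ℝ, x ≤ y → 0 ≤ x → 0 ≤ y := fun x y h hx => le_trans hx h
  have e0 : (0 < eigval G 0) ↔
      0 < (univ.filter (fun j => 0 < (adjMatR_isHermitian G).eigenvalues j)).card :=
    eigval_iff G (fun x => 0 < x) hup1 0 (by omega)
  have e1 : (0 < eigval G 1) ↔
      1 < (univ.filter (fun j => 0 < (adjMatR_isHermitian G).eigenvalues j)).card :=
    eigval_iff G (fun x => 0 < x) hup1 1 (by omega)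
  have e2 : (0 ≤ eigval G 2) ↔
      2 < (univ.filter (fun j => 0 ≤ (adjMatR_isHermitian G).eigenvalues j)).card :=
    eigval_iff G (fun x => 0 ≤ x) hup2 2 (by omega)
  rw [SpecCore.Npos, SpecCore.Nnn]
  constructor
  · rintro ⟨h0, h1, h2⟩
    rw [e0] at h0
    rw [← not_lt, e1] at h1
    rw [← not_le, e2] at h2
    omega
  · rintro ⟨h1, h2⟩
    refine ⟨e0.mpr (by omega), ?_, ?_⟩
    · rw [← not_lt, e1]; omega
    · rw [← not_le, e2]; omega

end Bridge


namespace SpecCore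

variable {n : ℕ} (A : Matrix (Fin n) (Fin n) ℝ) (hA : A.IsHermitian)

noncomputable def toEuc : (Fin n → ℝ) ≃ₗ[ℝ] EuclideanSpace ℝ (Fin n) :=
  (WithLp.linearEquiv 2 ℝ (Fin n → ℝ)).symm

lemma K1' (W : Submodule ℝ (Fin n → ℝ)) (hW : ∀ x ∈ W, x ≠ 0 → 0 < Bf A x x) :
    Module.finrank ℝ W ≤ Npos A hA := by
  have h := K1 A hA (W.map (toEuc (n := n) : (Fin n → ℝ) →ₗ[ℝ] EuclideanSpace ℝ (Fin n))) ?_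
  · rwa [LinearEquiv.finrank_map_eq] at h
  · rintro x ⟨y, hy, rfl⟩ hx0
    have hy0 : y ≠ 0 := fun h0 => hx0 (by rw [h0]; simp)
    exact hW y hy hy0

lemma K2' (W : Submodule ℝ (Fin n → ℝ)) (hW : ∀ x ∈ W, 0 ≤ Bf A x x) :
    Module.finrank ℝ W ≤ Nnn A hA := by
  have h := K2 A hA (W.map (toEuc (n := n) : (Fin n → ℝ) →ₗ[ℝ] EuclideanSpace ℝ (Fin n))) ?_
  · rwa [LinearEquiv.finrank_map_eq] at h
  · rintro x ⟨y, hy, rfl⟩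
    exact hW y hy

lemma K3' (W : Submodule ℝ (Fin n → ℝ)) (hW : ∀ x ∈ W, Bf A x x ≤ 0) :
    Module.finrank ℝ W + Npos A hA ≤ n := by
  have h := K3 A hA (W.map (toEuc (n := n) : (Fin n → ℝ) →ₗ[ℝ] EuclideanSpace ℝ (Fin n))) ?_
  · rwa [LinearEquiv.finrank_map_eq] at h
  · rintro x ⟨y, hy, rfl⟩
    exact hW y hy

lemma K4' (W : Submodule ℝ (Fin n → ℝ)) (hW : ∀ x ∈ W, x ≠ 0 → Bf A x x < 0) :
    Module.finrank ℝ W + Nnn A hA ≤ n := by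
  have h := K4 A hA (W.map (toEuc (n := n) : (Fin n → ℝ) →ₗ[ℝ] EuclideanSpace ℝ (Fin n))) ?_
  · rwa [LinearEquiv.finrank_map_eq] at h
  · rintro x ⟨y, hy, rfl⟩ hx0
    have hy0 : y ≠ 0 := fun h0 => hx0 (by rw [h0]; simp)
    exact hW y hy hy0

end SpecCore

namespace SpecCore

variable {n : ℕ}

lemma Bf_add_left (A : Matrix (Fin n) (Fin n) ℝ) (x y z : Fin n → ℝ) :
    Bf A (x + y) z = Bf A x z + Bf A y z := add_dotProduct _ _ _

lemma Bf_smul_left (A : Matrix (Fin n) (Fin n) ℝ) (c : ℝ) (x y : Fin n → ℝ) :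
    Bf A (c • x) y = c * Bf A x y := smul_dotProduct _ _ _

lemma Bf_sub_left (A : Matrix (Fin n) (Fin n) ℝ) (x y z : Fin n → ℝ) :
    Bf A (x - y) z = Bf A x z - Bf A y z := sub_dotProduct _ _ _

lemma Bf_add_right (A : Matrix (Fin n) (Fin n) ℝ) (x y z : Fin n → ℝ) :
    Bf A x (y + z) = Bf A x y + Bf A x z := by
  unfold Bf
  rw [Matrix.mulVec_add, dotProduct_add]

lemma Bf_smul_right (A : Matrix (Fin n) (Fin n) ℝ) (c : ℝ) (x y : Fin n → ℝ) :
    Bf A x (c • y) = c * Bf A x y := by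
  unfold Bf
  rw [Matrix.mulVec_smul, dotProduct_smul, smul_eq_mul]

lemma Bf_sub_right (A : Matrix (Fin n) (Fin n) ℝ) (x y z : Fin n → ℝ) :
    Bf A x (y - z) = Bf A x y - Bf A x z := by
  unfold Bf
  rw [Matrix.mulVec_sub, dotProduct_sub]

lemma Bf_single (A : Matrix (Fin n) (Fin n) ℝ) (i j : Fin n) :
    Bf A (Pi.single i 1) (Pi.single j 1) = A i j := by
  unfold Bf
  rw [Matrix.mulVec_single, dotProduct, Finset.sum_eq_single i]
  · simp
  · intro b _ hb
    simp [Pi.single_apply, hb]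
  · simp

lemma Bf_zero_left (A : Matrix (Fin n) (Fin n) ℝ) (y : Fin n → ℝ) : Bf A 0 y = 0 :=
  zero_dotProduct _

lemma onePos (A : Matrix (Fin n) (Fin n) ℝ) (hA : A.IsHermitian) (u : Fin n → ℝ)
    (hu : 0 < Bf A u u) : 1 ≤ Npos A hA := by
  have hu0 : u ≠ 0 := by
    rintro rfl
    rw [Bf_zero_left] at hu
    exact lt_irrefl _ hu
  have h := K1' A hA (Submodule.span ℝ {u}) ?_
  · rwa [finrank_span_singleton hu0] at h
  · intro x hx hx0
    obtain ⟨c, rfl⟩ := Submodule.mem_span_singleton.mp hx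
    have hc : c ≠ 0 := by
      rintro rfl
      simp at hx0
    rw [Bf_smul_left, Bf_smul_right]
    have hcc : 0 < c * c := mul_self_pos.mpr hc
    nlinarith

lemma twoPos (A : Matrix (Fin n) (Fin n) ℝ) (hA : A.IsHermitian) (u v : Fin n → ℝ)
    (hsym : Bf A u v = Bf A v u)
    (hu : 0 < Bf A u u) (hdet : Bf A u v ^ 2 < Bf A u u * Bf A v v) :
    2 ≤ Npos A hA := by
  have hQ : ∀ c0 c1 : ℝ, ¬(c0 = 0 ∧ c1 = 0) → 0 < Bf A (c0 • u + c1 • v) (c0 • u + c1 • v) := by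
    intro c0 c1 hc
    simp only [Bf_add_left, Bf_add_right, Bf_smul_left, Bf_smul_right]
    rw [hsym]
    rcases eq_or_ne c1 0 with rfl | hc1
    · have hc0 : c0 ≠ 0 := fun h => hc ⟨h, rfl⟩
      have hcc : 0 < c0 * c0 := mul_self_pos.mpr hc0
      nlinarith
    · have hcc : 0 < c1 * c1 := mul_self_pos.mpr hc1
      have hdet' : Bf A v u ^ 2 < Bf A u u * Bf A v v := by rw [← hsym]; exact hdet
      nlinarith [sq_nonneg (Bf A u u * c0 + Bf A v u * c1),
        mul_pos hcc (sub_pos.mpr hdet'), mul_pos hu hu]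
  have hli : LinearIndependent ℝ ![u, v] := by
    rw [LinearIndependent.pair_iff]
    intro s t hst
    by_contra hc
    have h2 := hQ s t (by tauto)
    rw [hst] at h2
    rw [Bf_zero_left] at h2
    exact lt_irrefl _ h2
  have h := K1' A hA (Submodule.span ℝ (Set.range ![u, v])) ?_
  · rwa [finrank_span_eq_card hli, Fintype.card_fin] at h
  · intro x hx hx0
    obtain ⟨c, hc⟩ := Submodule.mem_span_range_iff_exists_fun ℝ |>.mp hx
    rw [Fin.sum_univ_two] at hc
    simp only [Matrix.cons_val_zero, Matrix.cons_val_one, Matrix.head_cons] at hc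
    subst hc
    refine hQ (c 0) (c 1) ?_
    rintro ⟨h0, h1⟩
    rw [h0, h1] at hx0
    simp at hx0

lemma threeNN (A : Matrix (Fin n) (Fin n) ℝ) (hA : A.IsHermitian) (u v w : Fin n → ℝ)
    (hli : LinearIndependent ℝ ![u, v, w])
    (hQ : ∀ c0 c1 c2 : ℝ, 0 ≤ Bf A (c0 • u + c1 • v + c2 • w) (c0 • u + c1 • v + c2 • w)) :
    3 ≤ Nnn A hA := by
  have h := K2' A hA (Submodule.span ℝ (Set.range ![u, v, w])) ?_
  · rwa [finrank_span_eq_card hli, Fintype.card_fin] at h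
  · intro x hx
    obtain ⟨c, hc⟩ := Submodule.mem_span_range_iff_exists_fun ℝ |>.mp hx
    rw [Fin.sum_univ_three] at hc
    simp only [Matrix.cons_val_zero, Matrix.cons_val_one, Matrix.head_cons,
      Matrix.cons_val_two, Matrix.tail_cons] at hc
    subst hc
    exact hQ (c 0) (c 1) (c 2)

end SpecCore

section GraphTools

variable {n : ℕ} (G : SimpleGraph (Fin n))

lemma adj_entry {a b : Fin n} (h : G.Adj a b) : adjMatR G a b = 1 := by
  unfold adjMatR
  rw [SimpleGraph.adjMatrix_apply]
  exact if_pos h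

lemma nadj_entry {a b : Fin n} (h : ¬ G.Adj a b) : adjMatR G a b = 0 := by
  unfold adjMatR
  rw [SimpleGraph.adjMatrix_apply]
  exact if_neg h

lemma diag_entry (a : Fin n) : adjMatR G a a = 0 := nadj_entry G (G.irrefl)

lemma entry_nonneg (a b : Fin n) : 0 ≤ adjMatR G a b := by
  by_cases h : G.Adj a b
  · rw [adj_entry G h]; norm_num
  · rw [nadj_entry G h]

lemma entry_le_one (a b : Fin n) : adjMatR G a b ≤ 1 := by
  by_cases h : G.Adj a b
  · rw [adj_entry G h]
  · rw [nadj_entry G h]; norm_num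

lemma entry_symm (a b : Fin n) : adjMatR G a b = adjMatR G b a := by
  by_cases h : G.Adj a b
  · rw [adj_entry G h, adj_entry G h.symm]
  · rw [nadj_entry G h, nadj_entry G (fun h' => h h'.symm)]

lemma li_single3 {a b c : Fin n} (hab : a ≠ b) (hac : a ≠ c) (hbc : b ≠ c) :
    LinearIndependent ℝ ![(Pi.single a 1 : Fin n → ℝ), Pi.single b 1, Pi.single c 1] := by
  rw [Fintype.linearIndependent_iff]
  intro g hg
  rw [Fin.sum_univ_three] at hg
  simp only [Matrix.cons_val_zero, Matrix.cons_val_one, Matrix.head_cons,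
    Matrix.cons_val_two, Matrix.tail_cons] at hg
  have ha := congrFun hg a
  have hb := congrFun hg b
  have hc := congrFun hg c
  simp only [Pi.add_apply, Pi.smul_apply, Pi.single_apply, Pi.zero_apply, smul_eq_mul,
    if_pos rfl, if_neg hab.symm, if_neg hac.symm, if_neg hbc.symm, if_neg hab, if_neg hac,
    if_neg hbc, if_true, mul_one, mul_zero, add_zero, zero_add] at ha hb hc
  intro i
  fin_cases i
  · exact ha
  · exact hb
  · exact hc

variable {G}

lemma no_indep3
    (hN2 : SpecCore.Nnn (adjMatR G) (adjMatR_isHermitian G) ≤ 2)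
    {a b c : Fin n} (hab : a ≠ b) (hac : a ≠ c) (hbc : b ≠ c)
    (h1 : ¬G.Adj a b) (h2 : ¬G.Adj a c) (h3 : ¬G.Adj b c) : False := by
  have h := SpecCore.threeNN (adjMatR G) (adjMatR_isHermitian G)
    (Pi.single a 1) (Pi.single b 1) (Pi.single c 1) (li_single3 hab hac hbc) ?_
  · omega
  · intro c0 c1 c2
    simp only [SpecCore.Bf_add_left, SpecCore.Bf_add_right, SpecCore.Bf_smul_left,
      SpecCore.Bf_smul_right, SpecCore.Bf_single, diag_entry G, nadj_entry G h1,
      nadj_entry G h2, nadj_entry G h3, nadj_entry G (fun h => h1 h.symm),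
      nadj_entry G (fun h => h2 h.symm), nadj_entry G (fun h => h3 h.symm)]
    nlinarith []

lemma no_pair
    (hN1 : SpecCore.Npos (adjMatR G) (adjMatR_isHermitian G) ≤ 1)
    {a b c d : Fin n} (hab : G.Adj a b) (hcd : G.Adj c d)
    (hcross : adjMatR G a c + adjMatR G a d + adjMatR G b c + adjMatR G b d ≤ 1) : False := by
  have h := SpecCore.twoPos (adjMatR G) (adjMatR_isHermitian G)
    (Pi.single a 1 + Pi.single b 1) (Pi.single c 1 + Pi.single d 1) ?_ ?_ ?_
  · omega
  · simp only [SpecCore.Bf_add_left, SpecCore.Bf_add_right, SpecCore.Bf_single]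
    rw [entry_symm G a c, entry_symm G a d, entry_symm G b c, entry_symm G b d]
    ring
  · simp only [SpecCore.Bf_add_left, SpecCore.Bf_add_right, SpecCore.Bf_single,
      diag_entry G, adj_entry G hab, adj_entry G hab.symm]
    norm_num
  · simp only [SpecCore.Bf_add_left, SpecCore.Bf_add_right, SpecCore.Bf_single,
      diag_entry G, adj_entry G hab, adj_entry G hab.symm, adj_entry G hcd,
      adj_entry G hcd.symm]
    have h1 := entry_nonneg G a c
    have h2 := entry_nonneg G a d
    have h3 := entry_nonneg G b c
    have h4 := entry_nonneg G b d
    nlinarith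

lemma no_c4
    (hN2 : SpecCore.Nnn (adjMatR G) (adjMatR_isHermitian G) ≤ 2)
    {a b c d : Fin n} (hab : a ≠ b) (hac : a ≠ c) (had : a ≠ d) (hbc : b ≠ c)
    (hbd : b ≠ d) (hcd : c ≠ d)
    (nab : ¬G.Adj a b) (ncd : ¬G.Adj c d)
    (eac : G.Adj a c) (ead : G.Adj a d) (ebc : G.Adj b c) (ebd : G.Adj b d) : False := by
  have h := SpecCore.threeNN (adjMatR G) (adjMatR_isHermitian G)
    (Pi.single a 1 + Pi.single b 1 + Pi.single c 1 + Pi.single d 1)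
    (Pi.single a 1 - Pi.single b 1) (Pi.single c 1 - Pi.single d 1) ?_ ?_
  · omega
  · rw [Fintype.linearIndependent_iff]
    intro g hg
    rw [Fin.sum_univ_three] at hg
    simp only [Matrix.cons_val_zero, Matrix.cons_val_one, Matrix.head_cons,
      Matrix.cons_val_two, Matrix.tail_cons] at hg
    have h1 := congrFun hg a
    have h2 := congrFun hg b
    have h3 := congrFun hg c
    simp only [Pi.add_apply, Pi.sub_apply, Pi.smul_apply, Pi.single_apply, Pi.zero_apply,
      smul_eq_mul, if_pos rfl, if_neg hab, if_neg hac, if_neg had, if_neg hbc, if_neg hbd,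
      if_neg hcd, if_neg hab.symm, if_neg hac.symm, if_neg had.symm, if_neg hbc.symm,
      if_neg hbd.symm, if_neg hcd.symm, if_true, mul_one, mul_zero, add_zero, zero_add,
      sub_zero, zero_sub, mul_neg] at h1 h2 h3
    have e0 : g 0 = 0 := by linarith
    have e1 : g 1 = 0 := by linarith
    have e2 : g 2 = 0 := by linarith
    intro i
    fin_cases i
    · exact e0
    · exact e1
    · exact e2
  · intro c0 c1 c2
    simp only [SpecCore.Bf_add_left, SpecCore.Bf_add_right, SpecCore.Bf_sub_left,
      SpecCore.Bf_sub_right, SpecCore.Bf_smul_left, SpecCore.Bf_smul_right,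
      SpecCore.Bf_single, diag_entry G, nadj_entry G nab, nadj_entry G ncd,
      nadj_entry G (fun h => nab h.symm), nadj_entry G (fun h => ncd h.symm),
      adj_entry G eac, adj_entry G ead, adj_entry G ebc, adj_entry G ebd,
      adj_entry G eac.symm, adj_entry G ead.symm, adj_entry G ebc.symm, adj_entry G ebd.symm]
    nlinarith [sq_nonneg c0]

lemma no_paw
    (hN1 : SpecCore.Npos (adjMatR G) (adjMatR_isHermitian G) ≤ 1)
    {z w x y : Fin n}
    (exy : G.Adj x y) (ewx : G.Adj w x) (ewy : G.Adj w y) (ewz : G.Adj w z)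
    (nzx : ¬G.Adj z x) (nzy : ¬G.Adj z y) : False := by
  have h := SpecCore.twoPos (adjMatR G) (adjMatR_isHermitian G)
    (Pi.single x 1 + Pi.single y 1) (Pi.single w 1 + (2:ℝ) • (Pi.single z 1 : Fin n → ℝ)) ?_ ?_ ?_
  · omega
  · simp only [SpecCore.Bf_add_left, SpecCore.Bf_add_right, SpecCore.Bf_smul_left,
      SpecCore.Bf_smul_right, SpecCore.Bf_single]
    rw [entry_symm G x w, entry_symm G x z, entry_symm G y w, entry_symm G y z]
    ring
  · simp only [SpecCore.Bf_add_left, SpecCore.Bf_add_right, SpecCore.Bf_single,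
      diag_entry G, adj_entry G exy, adj_entry G exy.symm]
    norm_num
  · simp only [SpecCore.Bf_add_left, SpecCore.Bf_add_right, SpecCore.Bf_smul_left,
      SpecCore.Bf_smul_right, SpecCore.Bf_single, diag_entry G,
      adj_entry G exy, adj_entry G exy.symm, adj_entry G ewx, adj_entry G ewx.symm,
      adj_entry G ewy, adj_entry G ewy.symm, adj_entry G ewz, adj_entry G ewz.symm,
      nadj_entry G nzx, nadj_entry G nzy, nadj_entry G (fun h => nzx h.symm),
      nadj_entry G (fun h => nzy h.symm)]
    norm_num

end GraphTools

namespace SpecCore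

variable {n : ℕ}

lemma Bf_expand (A : Matrix (Fin n) (Fin n) ℝ) (x y : Fin n → ℝ) :
    Bf A x y = ∑ i, ∑ j, x i * (A i j * y j) := by
  unfold Bf
  rw [dotProduct]
  refine Finset.sum_congr rfl fun i _ => ?_
  rw [Matrix.mulVec, dotProduct, Finset.mul_sum]

end SpecCore

namespace SpecCore

variable {n : ℕ}

lemma Bf_perm (A B : Matrix (Fin n) (Fin n) ℝ) (σ : Equiv.Perm (Fin n))
    (hAB : ∀ i j, B (σ i) (σ j) = A i j) (v w : Fin n → ℝ) :
    Bf B (fun k => v (σ.symm k)) (fun k => w (σ.symm k)) = Bf A v w := by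
  rw [Bf_expand, Bf_expand]
  refine (Fintype.sum_equiv σ _ _ fun i => ?_).symm
  refine Fintype.sum_equiv σ _ _ fun j => ?_
  rw [hAB, Equiv.symm_apply_apply, Equiv.symm_apply_apply]

lemma Npos_le_perm (A B : Matrix (Fin n) (Fin n) ℝ) (hA : A.IsHermitian) (hB : B.IsHermitian)
    (σ : Equiv.Perm (Fin n)) (hAB : ∀ i j, B (σ i) (σ j) = A i j) :
    Npos A hA ≤ Npos B hB := by
  classical
  let S : Finset (Fin n) := univ.filter (fun j => 0 < hA.eigenvalues j)
  let T : (Fin n → ℝ) ≃ₗ[ℝ] (Fin n → ℝ) := LinearEquiv.funCongrLeft ℝ ℝ σ.symm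
  have hTapp : ∀ (v : Fin n → ℝ) (k : Fin n), T v k = v (σ.symm k) := fun v k => rfl
  let f : S → (Fin n → ℝ) := fun i => T (hA.eigenvectorBasis (i : Fin n))
  have hli : LinearIndependent ℝ f :=
    (((orthonormal_sub A hA S).linearIndependent).map' (WithLp.linearEquiv 2 ℝ (Fin n → ℝ)).toLinearMap
      (WithLp.linearEquiv 2 ℝ (Fin n → ℝ)).ker).map' T.toLinearMap T.ker
  have hrank := finrank_span_eq_card hli
  have hmem : ∀ x ∈ Submodule.span ℝ (Set.range f), x ≠ 0 → 0 < Bf B x x := by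
    intro x hx hx0
    obtain ⟨c, hc⟩ := Submodule.mem_span_range_iff_exists_fun ℝ |>.mp hx
    have hxy : x = T (∑ i : S, c i • (hA.eigenvectorBasis (i : Fin n) : Fin n → ℝ)) := by
      rw [← hc, map_sum]
      refine Finset.sum_congr rfl fun i _ => ?_
      rw [map_smul]
    set y : Fin n → ℝ := ∑ i : S, c i • (hA.eigenvectorBasis (i : Fin n) : Fin n → ℝ) with hy
    have hymem : WithLp.toLp 2 y ∈ eigSpan A hA S := by
      rw [eigSpan, Submodule.mem_span_range_iff_exists_fun]
      exact ⟨c, WithLp.ofLp_injective 2 (by simp [hy, WithLp.ofLp_sum])⟩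
    have hy0 : y ≠ 0 := fun h0 => hx0 (by rw [hxy, h0, map_zero])
    have hpos := eigSpan_pos A hA S
      (fun j hj => (Finset.mem_filter.mp hj).2) (WithLp.toLp 2 y) hymem (by simpa using hy0)
    have hxfun : x = fun k => y (σ.symm k) := by
      rw [hxy]; funext k; exact hTapp y k
    rw [hxfun, Bf_perm A B σ hAB y y]
    exact hpos
  have hK := K1' B hB (Submodule.span ℝ (Set.range f)) hmem
  rw [hrank, Fintype.card_coe] at hK
  exact hK

lemma Nnn_le_perm (A B : Matrix (Fin n) (Fin n) ℝ) (hA : A.IsHermitian) (hB : B.IsHermitian)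
    (σ : Equiv.Perm (Fin n)) (hAB : ∀ i j, B (σ i) (σ j) = A i j) :
    Nnn A hA ≤ Nnn B hB := by
  classical
  let S : Finset (Fin n) := univ.filter (fun j => 0 ≤ hA.eigenvalues j)
  let T : (Fin n → ℝ) ≃ₗ[ℝ] (Fin n → ℝ) := LinearEquiv.funCongrLeft ℝ ℝ σ.symm
  have hTapp : ∀ (v : Fin n → ℝ) (k : Fin n), T v k = v (σ.symm k) := fun v k => rfl
  let f : S → (Fin n → ℝ) := fun i => T (hA.eigenvectorBasis (i : Fin n))
  have hli : LinearIndependent ℝ f :=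
    (((orthonormal_sub A hA S).linearIndependent).map' (WithLp.linearEquiv 2 ℝ (Fin n → ℝ)).toLinearMap
      (WithLp.linearEquiv 2 ℝ (Fin n → ℝ)).ker).map' T.toLinearMap T.ker
  have hrank := finrank_span_eq_card hli
  have hmem : ∀ x ∈ Submodule.span ℝ (Set.range f), 0 ≤ Bf B x x := by
    intro x hx
    obtain ⟨c, hc⟩ := Submodule.mem_span_range_iff_exists_fun ℝ |>.mp hx
    have hxy : x = T (∑ i : S, c i • (hA.eigenvectorBasis (i : Fin n) : Fin n → ℝ)) := by
      rw [← hc, map_sum]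
      refine Finset.sum_congr rfl fun i _ => ?_
      rw [map_smul]
    set y : Fin n → ℝ := ∑ i : S, c i • (hA.eigenvectorBasis (i : Fin n) : Fin n → ℝ) with hy
    have hymem : WithLp.toLp 2 y ∈ eigSpan A hA S := by
      rw [eigSpan, Submodule.mem_span_range_iff_exists_fun]
      exact ⟨c, WithLp.ofLp_injective 2 (by simp [hy, WithLp.ofLp_sum])⟩
    have hpos := eigSpan_nonneg A hA S
      (fun j hj => (Finset.mem_filter.mp hj).2) (WithLp.toLp 2 y) hymem
    have hxfun : x = fun k => y (σ.symm k) := by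
      rw [hxy]; funext k; exact hTapp y k
    rw [hxfun, Bf_perm A B σ hAB y y]
    exact hpos
  have hK := K2' B hB (Submodule.span ℝ (Set.range f)) hmem
  rw [hrank, Fintype.card_coe] at hK
  exact hK

end SpecCore

section IsoInv

variable {n : ℕ} {G H : SimpleGraph (Fin n)}

lemma entry_iso (e : G ≃g H) (i j : Fin n) : adjMatR H (e i) (e j) = adjMatR G i j := by
  by_cases h : G.Adj i j
  · rw [adj_entry G h, adj_entry H (e.map_adj_iff.mpr h)]
  · rw [nadj_entry G h, nadj_entry H (fun h' => h (e.map_adj_iff.mp h'))]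

lemma Npos_iso (e : G ≃g H) : SpecCore.Npos (adjMatR G) (adjMatR_isHermitian G) =
    SpecCore.Npos (adjMatR H) (adjMatR_isHermitian H) :=
  le_antisymm
    (SpecCore.Npos_le_perm _ _ _ _ e.toEquiv (entry_iso e))
    (SpecCore.Npos_le_perm _ _ _ _ e.symm.toEquiv (entry_iso e.symm))

lemma Nnn_iso (e : G ≃g H) : SpecCore.Nnn (adjMatR G) (adjMatR_isHermitian G) =
    SpecCore.Nnn (adjMatR H) (adjMatR_isHermitian H) :=
  le_antisymm
    (SpecCore.Nnn_le_perm _ _ _ _ e.toEquiv (entry_iso e))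
    (SpecCore.Nnn_le_perm _ _ _ _ e.symm.toEquiv (entry_iso e.symm))

end IsoInv

section Backward

open SpecCore

variable {n : ℕ}

noncomputable def sumF (s : Finset (Fin n)) : (Fin n → ℝ) →ₗ[ℝ] ℝ where
  toFun v := ∑ i ∈ s, v i
  map_add' v w := by simp [Finset.sum_add_distrib]
  map_smul' c v := by simp [Finset.mul_sum]

@[simp] lemma sumF_apply (s : Finset (Fin n)) (v : Fin n → ℝ) : sumF s v = ∑ i ∈ s, v i := rfl

lemma ker_codim (f : (Fin n → ℝ) →ₗ[ℝ] ℝ) :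
    n ≤ Module.finrank ℝ (LinearMap.ker f) + 1 := by
  have h := LinearMap.finrank_range_add_finrank_ker f
  have h2 : Module.finrank ℝ (LinearMap.range f) ≤ 1 := by
    simpa using Submodule.finrank_le (LinearMap.range f)
  rw [Module.finrank_pi, Fintype.card_fin] at h
  omega

lemma inf_codim (W U : Submodule ℝ (Fin n → ℝ)) :
    Module.finrank ℝ W + Module.finrank ℝ U ≤
      n + Module.finrank ℝ ↥(W ⊓ U) := by
  have h := Submodule.finrank_sup_add_finrank_inf_eq W U
  have h2 : Module.finrank ℝ ↥(W ⊔ U) ≤ n := by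
    have := Submodule.finrank_le (W ⊔ U)
    rwa [Module.finrank_pi, Fintype.card_fin] at this
  omega

lemma Bf_top (v : Fin n → ℝ) :
    Bf (adjMatR (⊤ : SimpleGraph (Fin n))) v v = (∑ j, v j)^2 - ∑ j, (v j)^2 := by
  rw [Bf_expand]
  have hterm : ∀ i j : Fin n, v i * (adjMatR (⊤ : SimpleGraph (Fin n)) i j * v j)
      = v i * v j - (if i = j then v i * v j else 0) := by
    intro i j
    by_cases h : i = j
    · subst h
      rw [diag_entry]
      simp
    · rw [adj_entry _ (by simpa using h : (⊤ : SimpleGraph (Fin n)).Adj i j)]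
      simp [h]
  calc ∑ i, ∑ j, v i * (adjMatR (⊤ : SimpleGraph (Fin n)) i j * v j)
      = ∑ i : Fin n, (v i * ∑ j, v j - v i * v i) := by
        refine Finset.sum_congr rfl fun i _ => ?_
        rw [Finset.sum_congr rfl (fun j _ => hterm i j), Finset.sum_sub_distrib,
          Finset.sum_ite_eq univ i (fun j => v i * v j), if_pos (Finset.mem_univ i),
          ← Finset.mul_sum]
    _ = (∑ j, v j)^2 - ∑ j, (v j)^2 := by
        rw [Finset.sum_sub_distrib, ← Finset.sum_mul, sq]
        congr 1
        refine Finset.sum_congr rfl fun j _ => ?_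
        rw [sq]

lemma sum_ite_pair (p q : Fin n) (f : Fin n → Fin n → ℝ) :
    ∑ i, ∑ j, (if i = p then if j = q then f i j else 0 else 0) = f p q := by
  have h : ∀ i : Fin n, ∑ j, (if i = p then if j = q then f i j else 0 else 0)
      = if i = p then f i q else 0 := by
    intro i
    by_cases h : i = p
    · simp only [h, if_true]
      rw [Finset.sum_ite_eq' univ q (fun j => f p j), if_pos (Finset.mem_univ q)]
    · simp [h]
  rw [Finset.sum_congr rfl (fun i _ => h i),
    Finset.sum_ite_eq' univ p (fun i => f i q), if_pos (Finset.mem_univ p)]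

lemma adj_del_entry (a b : Fin n) (hab : a ≠ b) (i j : Fin n) :
    adjMatR ((⊤ : SimpleGraph (Fin n)).deleteEdges {s(a,b)}) i j
      = adjMatR (⊤ : SimpleGraph (Fin n)) i j
        - (if (i = a ∧ j = b) ∨ (i = b ∧ j = a) then 1 else 0) := by
  by_cases hc : (i = a ∧ j = b) ∨ (i = b ∧ j = a)
  · have hij : i ≠ j := by
      rcases hc with ⟨rfl, rfl⟩ | ⟨rfl, rfl⟩
      · exact hab
      · exact hab.symm
    rw [if_pos hc, adj_entry _ (by simpa using hij : (⊤ : SimpleGraph (Fin n)).Adj i j),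
      nadj_entry]
    · ring
    · rw [SimpleGraph.deleteEdges_adj]
      rintro ⟨-, hmem⟩
      exact hmem (Set.mem_singleton_iff.mpr (Sym2.eq_iff.mpr hc))
  · rw [if_neg hc, sub_zero]
    by_cases hij : i = j
    · subst hij
      rw [diag_entry, diag_entry]
    · rw [adj_entry _ (by simpa using hij : (⊤ : SimpleGraph (Fin n)).Adj i j), adj_entry]
      rw [SimpleGraph.deleteEdges_adj]
      exact ⟨by simpa using hij, fun hmem => hc (Sym2.eq_iff.mp (Set.mem_singleton_iff.mp hmem))⟩

lemma Bf_del (a b : Fin n) (hab : a ≠ b) (v : Fin n → ℝ) :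
    Bf (adjMatR ((⊤ : SimpleGraph (Fin n)).deleteEdges {s(a,b)})) v v
      = (∑ j, v j)^2 - ∑ j, (v j)^2 - (v a * v b + v b * v a) := by
  rw [Bf_expand]
  have hterm : ∀ i j : Fin n, v i * (adjMatR ((⊤ : SimpleGraph (Fin n)).deleteEdges {s(a,b)}) i j * v j)
      = v i * (adjMatR (⊤ : SimpleGraph (Fin n)) i j * v j)
        - ((if i = a then if j = b then v i * v j else 0 else 0)
           + (if i = b then if j = a then v i * v j else 0 else 0)) := by
    intro i j
    rw [adj_del_entry a b hab]
    by_cases h1 : i = a <;> by_cases h2 : j = b <;> by_cases h3 : i = b <;>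
      by_cases h4 : j = a <;> simp_all <;> try ring
  rw [Finset.sum_congr rfl (fun i _ => Finset.sum_congr rfl (fun j _ => hterm i j))]
  simp only [Finset.sum_sub_distrib, Finset.sum_add_distrib]
  rw [sum_ite_pair a b (fun i j => v i * v j), sum_ite_pair b a (fun i j => v i * v j),
    ← Bf_expand, Bf_top]
  try ring

lemma k1_adj (hpos : 0 < n) (i j : Fin n) :
    (k1PlusComplete n).Adj i j ↔ i ≠ j ∧ i ≠ ⟨0, hpos⟩ ∧ j ≠ ⟨0, hpos⟩ := by
  have hz : ∀ u : Fin n, ((u : ℕ) ≠ 0) ↔ u ≠ ⟨0, hpos⟩ := by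
    intro u
    rw [Ne, Ne, Fin.ext_iff]
  unfold k1PlusComplete
  rw [SimpleGraph.fromRel_adj]
  constructor
  · rintro ⟨hne, h | h⟩
    · exact ⟨hne, (hz i).mp h.1, (hz j).mp h.2⟩
    · exact ⟨hne, (hz i).mp h.2, (hz j).mp h.1⟩
  · rintro ⟨hne, hi, hj⟩
    exact ⟨hne, Or.inl ⟨(hz i).mpr hi, (hz j).mpr hj⟩⟩

lemma Bf_k1 (hpos : 0 < n) (v : Fin n → ℝ) :
    Bf (adjMatR (k1PlusComplete n)) v v
      = Bf (adjMatR (⊤ : SimpleGraph (Fin n)))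
          (Function.update v ⟨0, hpos⟩ 0) (Function.update v ⟨0, hpos⟩ 0) := by
  set z : Fin n := ⟨0, hpos⟩ with hzdef
  set v' : Fin n → ℝ := Function.update v z 0 with hv'
  rw [Bf_expand, Bf_expand]
  refine Finset.sum_congr rfl fun i _ => Finset.sum_congr rfl fun j _ => ?_
  by_cases hi : i = z
  · have : adjMatR (k1PlusComplete n) i j = 0 := by
      apply nadj_entry
      rw [k1_adj hpos]
      rintro ⟨-, hi', -⟩
      exact hi' hi
    rw [this]
    have : v' i = 0 := by rw [hi, hv']; simp
    rw [this]
    ring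
  · by_cases hj : j = z
    · have : adjMatR (k1PlusComplete n) i j = 0 := by
        apply nadj_entry
        rw [k1_adj hpos]
        rintro ⟨-, -, hj'⟩
        exact hj' hj
      rw [this]
      have : v' j = 0 := by rw [hj, hv']; simp
      rw [this]
      ring
    · have hvi : v' i = v i := Function.update_of_ne hi 0 v
      have hvj : v' j = v j := Function.update_of_ne hj 0 v
      rw [hvi, hvj]
      by_cases hij : i = j
      · subst hij
        rw [diag_entry, diag_entry]
      · rw [adj_entry _ ((k1_adj hpos i j).mpr ⟨hij, hi, hj⟩),
          adj_entry _ (by simpa using hij : (⊤ : SimpleGraph (Fin n)).Adj i j)]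

lemma Bf_edge_pos {G : SimpleGraph (Fin n)} {a b : Fin n} (h : G.Adj a b) :
    1 ≤ Npos (adjMatR G) (adjMatR_isHermitian G) := by
  apply onePos (adjMatR G) (adjMatR_isHermitian G)
    ((Pi.single a 1 : Fin n → ℝ) + Pi.single b 1)
  simp only [Bf_add_left, Bf_add_right, Bf_single, diag_entry G, adj_entry G h,
    adj_entry G h.symm]
  norm_num

lemma sum_sq_pos {v : Fin n → ℝ} (hv : v ≠ 0) : 0 < ∑ j, (v j)^2 := by
  obtain ⟨k, hk⟩ := Function.ne_iff.mp hv
  exact Finset.sum_pos' (fun j _ => sq_nonneg _)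
    ⟨k, Finset.mem_univ k, pow_two_pos_of_ne_zero hk⟩

lemma counts_top (hn : 3 ≤ n) :
    Npos (adjMatR (⊤ : SimpleGraph (Fin n))) (adjMatR_isHermitian _) = 1 ∧
    Nnn (adjMatR (⊤ : SimpleGraph (Fin n))) (adjMatR_isHermitian _) ≤ 2 := by
  set W := LinearMap.ker (sumF (univ : Finset (Fin n))) with hW
  have hsum : ∀ v ∈ W, ∑ j, v j = 0 := by
    intro v hv
    simpa using LinearMap.mem_ker.mp hv
  have hneg : ∀ v ∈ W, v ≠ 0 → Bf (adjMatR (⊤ : SimpleGraph (Fin n))) v v < 0 := by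
    intro v hv hv0
    rw [Bf_top, hsum v hv]
    have := sum_sq_pos hv0
    nlinarith
  have h4 := K4' _ (adjMatR_isHermitian _) W hneg
  have h3 := K3' _ (adjMatR_isHermitian _) W (fun v hv => by
    rcases eq_or_ne v 0 with rfl | hv0
    · rw [Bf_zero_left]
    · exact le_of_lt (hneg v hv hv0))
  have hcod := ker_codim (sumF (univ : Finset (Fin n)))
  rw [← hW] at hcod
  have h1 : 1 ≤ Npos (adjMatR (⊤ : SimpleGraph (Fin n))) (adjMatR_isHermitian _) := by
    refine Bf_edge_pos (a := ⟨0, by omega⟩) (b := ⟨1, by omega⟩) ?_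
    simp [Fin.ext_iff]
  constructor
  · omega
  · omega

lemma counts_del (hn : 3 ≤ n) (a b : Fin n) (hab : a ≠ b) :
    Npos (adjMatR ((⊤ : SimpleGraph (Fin n)).deleteEdges {s(a,b)})) (adjMatR_isHermitian _) = 1 ∧
    Nnn (adjMatR ((⊤ : SimpleGraph (Fin n)).deleteEdges {s(a,b)})) (adjMatR_isHermitian _) ≤ 2 := by
  set W := LinearMap.ker (sumF (univ : Finset (Fin n))) with hW
  have hsum : ∀ v ∈ W, ∑ j, v j = 0 := by
    intro v hv
    simpa using LinearMap.mem_ker.mp hv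
  have hpair : ∀ v : Fin n → ℝ, (v a)^2 + (v b)^2 ≤ ∑ j, (v j)^2 := by
    intro v
    calc (v a)^2 + (v b)^2 = ∑ j ∈ ({a, b} : Finset (Fin n)), (v j)^2 :=
          (Finset.sum_pair (f := fun j => (v j)^2) hab).symm
      _ ≤ ∑ j, (v j)^2 := Finset.sum_le_sum_of_subset_of_nonneg (Finset.subset_univ _)
          (fun j _ _ => sq_nonneg _)
  have h3 := K3' _ (adjMatR_isHermitian _) W (fun v hv => by
    rw [Bf_del a b hab, hsum v hv]
    have := hpair v
    nlinarith [sq_nonneg (v a + v b)])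
  set W2 := W ⊓ LinearMap.ker (LinearMap.proj (R := ℝ) (φ := fun _ : Fin n => ℝ) a) with hW2
  have h4 := K4' _ (adjMatR_isHermitian _) W2 (fun v hv hv0 => by
    have hva : v a = 0 := by
      have := hv.2
      simpa using LinearMap.mem_ker.mp this
    rw [Bf_del a b hab, hsum v hv.1, hva]
    have := sum_sq_pos hv0
    nlinarith)
  have hcod := ker_codim (sumF (univ : Finset (Fin n)))
  rw [← hW] at hcod
  have hcod2 := ker_codim (LinearMap.proj (R := ℝ) (φ := fun _ : Fin n => ℝ) a)
  have hinf := inf_codim W (LinearMap.ker (LinearMap.proj (R := ℝ) (φ := fun _ : Fin n => ℝ) a))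
  rw [← hW2] at hinf
  obtain ⟨c, hca, hcb⟩ : ∃ c : Fin n, c ≠ a ∧ c ≠ b := by
    by_contra h
    push_neg at h
    have hsub : (univ : Finset (Fin n)) ⊆ {a, b} := by
      intro x _
      rcases eq_or_ne x a with rfl | hxa
      · simp
      · simp [h x hxa]
    have h1 := Finset.card_le_card hsub
    have hle : ({a, b} : Finset (Fin n)).card ≤ 2 :=
      (Finset.card_insert_le a {b}).trans (by simp)
    rw [Finset.card_univ, Fintype.card_fin] at h1
    omega
  have hadj : ((⊤ : SimpleGraph (Fin n)).deleteEdges {s(a,b)}).Adj a c := by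
    rw [SimpleGraph.deleteEdges_adj]
    refine ⟨by simpa using (Ne.symm hca), ?_⟩
    intro hmem
    rcases Sym2.eq_iff.mp (Set.mem_singleton_iff.mp hmem) with ⟨-, h2⟩ | ⟨h1, -⟩
    · exact hcb h2
    · exact hab h1
  have h1 := Bf_edge_pos hadj
  constructor
  · omega
  · omega

lemma counts_k1 (hn : 3 ≤ n) :
    Npos (adjMatR (k1PlusComplete n)) (adjMatR_isHermitian _) = 1 ∧
    Nnn (adjMatR (k1PlusComplete n)) (adjMatR_isHermitian _) ≤ 2 := by
  have hpos : 0 < n := by omega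
  set z : Fin n := ⟨0, hpos⟩ with hz
  set W := LinearMap.ker (sumF (univ.erase z)) with hW
  have hupd : ∀ v ∈ W, ∑ j, (Function.update v z 0) j = 0 := by
    intro v hv
    rw [Finset.sum_update_of_mem (Finset.mem_univ z)]
    have := LinearMap.mem_ker.mp hv
    simpa using this
  have h3 := K3' _ (adjMatR_isHermitian (k1PlusComplete n)) W (fun v hv => by
    rw [Bf_k1 hpos, Bf_top, hupd v hv]
    have : 0 ≤ ∑ j, (Function.update v z 0 j)^2 :=
      Finset.sum_nonneg fun j _ => sq_nonneg _
    nlinarith)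
  set W2 := W ⊓ LinearMap.ker (LinearMap.proj (R := ℝ) (φ := fun _ : Fin n => ℝ) z) with hW2
  have h4 := K4' _ (adjMatR_isHermitian (k1PlusComplete n)) W2 (fun v hv hv0 => by
    have hvz : v z = 0 := by
      have := hv.2
      simpa using LinearMap.mem_ker.mp this
    have hvv : Function.update v z 0 = v := by
      funext k
      rcases eq_or_ne k z with rfl | hk
      · rw [Function.update_self, hvz]
      · rw [Function.update_of_ne hk]
    rw [Bf_k1 hpos, hvv, Bf_top]
    have hs := hupd v hv.1
    rw [hvv] at hs
    rw [hs]
    have := sum_sq_pos hv0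
    nlinarith)
  have hcod := ker_codim (sumF (univ.erase z))
  rw [← hW] at hcod
  have hcod2 := ker_codim (LinearMap.proj (R := ℝ) (φ := fun _ : Fin n => ℝ) z)
  have hinf := inf_codim W (LinearMap.ker (LinearMap.proj (R := ℝ) (φ := fun _ : Fin n => ℝ) z))
  rw [← hW2] at hinf
  have hadj : (k1PlusComplete n).Adj ⟨1, by omega⟩ ⟨2, by omega⟩ := by
    rw [k1_adj hpos]
    refine ⟨?_, ?_, ?_⟩ <;> simp [Fin.ext_iff]
  have h1 := Bf_edge_pos hadj
  constructor
  · omega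
  · omega

end Backward

section Forward

open SpecCore

variable {n : ℕ} {G : SimpleGraph (Fin n)}

lemma no_disjoint
    (hN1 : Npos (adjMatR G) (adjMatR_isHermitian G) ≤ 1)
    (hN2 : Nnn (adjMatR G) (adjMatR_isHermitian G) ≤ 2)
    {a b c d : Fin n} (hab : a ≠ b) (hcd : c ≠ d) (hac : a ≠ c) (had : a ≠ d)
    (hbc : b ≠ c) (hbd : b ≠ d)
    (nab : ¬G.Adj a b) (ncd : ¬G.Adj c d) : False := by
  by_cases eac : G.Adj a c
  · by_cases ebd : G.Adj b d
    · by_cases ead : G.Adj a d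
      · by_cases ebc : G.Adj b c
        · exact no_c4 hN2 hab hac had hbc hbd hcd nab ncd eac ead ebc ebd
        · refine no_pair hN1 eac ebd ?_
          rw [nadj_entry G nab, nadj_entry G (fun h => ebc h.symm), nadj_entry G ncd]
          have := entry_le_one G a d
          linarith
      · refine no_pair hN1 eac ebd ?_
        rw [nadj_entry G nab, nadj_entry G ead, nadj_entry G ncd]
        have := entry_le_one G c b
        linarith
    · by_cases ead : G.Adj a d
      · by_cases ebc : G.Adj b c
        · refine no_pair hN1 ead ebc ?_
          rw [nadj_entry G nab, nadj_entry G (fun h => ebd h.symm),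
            nadj_entry G (fun h => ncd h.symm)]
          have := entry_le_one G a c
          linarith
        · exact no_indep3 hN2 hbc hbd hcd ebc ebd ncd
      · exact no_indep3 hN2 hab had hbd nab ead ebd
  · by_cases ead : G.Adj a d
    · by_cases ebc : G.Adj b c
      · refine no_pair hN1 ead ebc ?_
        rw [nadj_entry G nab, nadj_entry G eac, nadj_entry G (fun h => ncd h.symm)]
        have := entry_le_one G d b
        linarith
      · exact no_indep3 hN2 hab hac hbc nab eac ebc
    · exact no_indep3 hN2 hac had hcd eac ead ncd

lemma forward_cases (hn : 3 ≤ n)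
    (hN1 : Npos (adjMatR G) (adjMatR_isHermitian G) ≤ 1)
    (hN2 : Nnn (adjMatR G) (adjMatR_isHermitian G) ≤ 2) :
    (∀ u v : Fin n, u ≠ v → G.Adj u v) ∨
    (∃ a b : Fin n, a ≠ b ∧ ¬G.Adj a b ∧
      ∀ u v : Fin n, u ≠ v → ¬G.Adj u v → s(u,v) = s(a,b)) ∨
    (∃ z : Fin n, (∀ u, u ≠ z → ¬G.Adj z u) ∧
      (∀ u v : Fin n, u ≠ v → u ≠ z → v ≠ z → G.Adj u v)) := by
  by_cases hA : ∀ u v : Fin n, u ≠ v → G.Adj u v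
  · exact Or.inl hA
  push_neg at hA
  obtain ⟨a, b, hab, nab⟩ := hA
  by_cases hB : ∀ u v : Fin n, u ≠ v → ¬G.Adj u v → s(u,v) = s(a,b)
  · exact Or.inr (Or.inl ⟨a, b, hab, nab, hB⟩)
  push_neg at hB
  obtain ⟨c, d, hcd, ncd, hne⟩ := hB
  -- the two non-edges must share a vertex
  have hshare : ∃ z x y : Fin n, x ≠ y ∧ x ≠ z ∧ y ≠ z ∧ ¬G.Adj z x ∧ ¬G.Adj z y := by
    rcases eq_or_ne a c with rfl | hac
    · refine ⟨a, b, d, ?_, hab.symm, hcd.symm, nab, ncd⟩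
      rintro rfl
      exact hne rfl
    rcases eq_or_ne a d with rfl | had
    · refine ⟨a, b, c, ?_, hab.symm, hcd, nab, fun h => ncd h.symm⟩
      rintro rfl
      exact hne (Sym2.eq_swap)
    rcases eq_or_ne b c with rfl | hbc
    · refine ⟨b, a, d, ?_, hab, hcd.symm, fun h => nab h.symm, ncd⟩
      rintro rfl
      exact hne (Sym2.eq_swap)
    rcases eq_or_ne b d with rfl | hbd
    · refine ⟨b, a, c, ?_, hab, hcd, fun h => nab h.symm, fun h => ncd h.symm⟩
      rintro rfl
      exact hne rfl
    exact absurd (no_disjoint hN1 hN2 hab hcd hac had hbc hbd nab ncd) (fun h => h)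
  obtain ⟨z, x, y, hxy, hxz, hyz, nzx, nzy⟩ := hshare
  have exy : G.Adj x y := by
    by_contra nxy
    exact no_indep3 hN2 (fun h => hxz h.symm) (fun h => hyz h.symm) hxy nzx nzy nxy
  have hz : ∀ u, u ≠ z → ¬G.Adj z u := by
    intro w hw ezw
    have hwx : w ≠ x := by
      rintro rfl
      exact nzx ezw
    have hwy : w ≠ y := by
      rintro rfl
      exact nzy ezw
    have ewx : G.Adj w x := by
      by_contra nwx
      exact no_disjoint hN1 hN2 hwx (Ne.symm hyz) hw hwy hxz hxy nwx nzy
    have ewy : G.Adj w y := by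
      by_contra nwy
      exact no_disjoint hN1 hN2 hwy (Ne.symm hxz) hw hwx hyz hxy.symm nwy nzx
    exact no_paw hN1 exy ewx ewy ezw.symm nzx nzy
  refine Or.inr (Or.inr ⟨z, hz, fun u v huv huz hvz => ?_⟩)
  by_contra nuv
  exact no_indep3 hN2 (Ne.symm huz) (Ne.symm hvz) huv (hz u huz) (hz v hvz) nuv

end Forward

theorem eigval_sign_iff (n : ℕ) (hn : 3 ≤ n) (G : SimpleGraph (Fin n)) :
    (0 < eigval G 0 ∧ eigval G 1 ≤ 0 ∧ eigval G 2 < 0) ↔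
      (Nonempty (G ≃g (⊤ : SimpleGraph (Fin n))) ∨
        Nonempty (G ≃g k1PlusComplete n) ∨
        ∃ e ∈ (⊤ : SimpleGraph (Fin n)).edgeSet,
          Nonempty (G ≃g (⊤ : SimpleGraph (Fin n)).deleteEdges {e})) := by
  have hpos : 0 < n := by omega
  rw [cond_iff_counts G hn]
  constructor
  · rintro ⟨h1, h2⟩
    rcases forward_cases hn (le_of_eq h1) h2 with hA | ⟨a, b, hab, nab, hB⟩ | ⟨z, hz, hcomp⟩
    · left
      refine ⟨⟨Equiv.refl _, ?_⟩⟩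
      intro u v
      simp only [Equiv.refl_apply, SimpleGraph.top_adj]
      exact ⟨fun h => hA u v h, fun h => h.ne⟩
    · right; right
      refine ⟨s(a,b), ((SimpleGraph.mem_edgeSet _).mpr (by simpa using hab)), ⟨⟨Equiv.refl _, ?_⟩⟩⟩
      intro u v
      simp only [Equiv.refl_apply, SimpleGraph.deleteEdges_adj, SimpleGraph.top_adj,
        Set.mem_singleton_iff]
      constructor
      · rintro ⟨hne, hmem⟩
        by_contra nuv
        exact hmem (hB u v hne nuv)
      · intro h
        refine ⟨h.ne, fun heq => ?_⟩
        rcases Sym2.eq_iff.mp heq with ⟨rfl, rfl⟩ | ⟨rfl, rfl⟩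
        · exact nab h
        · exact nab h.symm
    · right; left
      set z0 : Fin n := ⟨0, hpos⟩ with hz0
      refine ⟨⟨Equiv.swap z z0, ?_⟩⟩
      intro u v
      have hswap : ∀ w : Fin n, Equiv.swap z z0 w = z0 ↔ w = z := by
        intro w
        constructor
        · intro h
          have := (Equiv.swap z z0).injective (h.trans (Equiv.swap_apply_left z z0).symm)
          exact this
        · intro h
          rw [h]
          exact Equiv.swap_apply_left z z0
      rw [k1_adj hpos]
      constructor
      · rintro ⟨h1', h2', h3'⟩
        have huv : u ≠ v := fun h => h1' (by rw [h])
        have huz : u ≠ z := fun h => h2' ((hswap u).mpr h)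
        have hvz : v ≠ z := fun h => h3' ((hswap v).mpr h)
        exact hcomp u v huv huz hvz
      · intro h
        have huv : u ≠ v := h.ne
        have huz : u ≠ z := by
          rintro rfl
          exact hz v (fun hh => huv hh.symm) h
        have hvz : v ≠ z := by
          rintro rfl
          exact hz u huz h.symm
        refine ⟨fun hh => huv ((Equiv.swap z z0).injective hh), ?_, ?_⟩
        · exact fun hh => huz ((hswap u).mp hh)
        · exact fun hh => hvz ((hswap v).mp hh)
  · rintro (he | he | ⟨E, hE, he⟩)
    · obtain ⟨e⟩ := he
      rw [Npos_iso e, Nnn_iso e]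
      exact counts_top hn
    · obtain ⟨e⟩ := he
      rw [Npos_iso e, Nnn_iso e]
      exact counts_k1 hn
    · obtain ⟨e⟩ := he
      rw [Npos_iso e, Nnn_iso e]
      induction E using Sym2.ind with
      | _ a b =>
        have hab : a ≠ b := by
          have := (SimpleGraph.mem_edgeSet _).mp hE
          simpa using this
        exact counts_del hn a b hab
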